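/- In the setting of the mixing AMDP saddle-point problem: let (v^ε, μ^ε) be a pair with duality gap at most ε, decompose μ^ε_{i,a} = λ^ε_i π_{i,a} with λ^ε ∈ Δ^S and policy π, let P^π := Π P be the induced S×S transition matrix with stationary distribution ν^π, and r^π := Π r. Assume (a) (μ^ε)ᵀ((Î − P)v* − r) + v̄* ≤ ε (from the gap bound), (b) ‖(λ^ε)ᵀ(P^π − I)‖_1 ≤ ε/M with M = 2 t_mix, (c) ‖(I − P^π + 1(ν^π)ᵀ)^{-1}‖_∞ ≤ 2 t_mix, and (d) ‖v*‖_∞ ≤ M. Then the average reward of π satisfies (ν^π)ᵀ r^π ≥ v̄* − 3ε. -/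
import Mathlib


open Finset

/-- Operator ∞-norm of a matrix: maximum absolute row sum. -/
noncomputable def matNormInf {S : Type*} [Fintype S] [Nonempty S] (A : Matrix S S ℝ) : ℝ :=
  Finset.univ.sup' Finset.univ_nonempty (fun i => ∑ j, |A i j|)

/-- Rounding an ε-approximate saddle-point solution of the mixing AMDP to a policy:
the induced policy has average reward at least `v̄* − 3ε`. -/
theorem stmt15 {S A : Type*} [Fintype S] [DecidableEq S] [Nonempty S] [Fintype A]
    (st : A → S) (P : Matrix A S ℝ)
    (hPnn : ∀ a j, 0 ≤ P a j) (hProw : ∀ a, ∑ j, P a j = 1)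
    (r : A → ℝ) (hr : ∀ a, 0 ≤ r a ∧ r a ≤ 1)
    (tmix : ℕ) (htmix : 0 < tmix) (M : ℝ) (hMdef : M = 2 * tmix)
    (ε : ℝ)
    -- the approximate dual solution and its decomposition into marginal and policy
    (με : A → ℝ) (hμεnn : ∀ a, 0 ≤ με a) (hμεsum : ∑ a, με a = 1)
    (lam : S → ℝ) (hlam : ∀ i, lam i = ∑ a ∈ Finset.univ.filter (fun a => st a = i), με a)
    (π : A → ℝ) (hπnn : ∀ a, 0 ≤ π a)
    (hπrow : ∀ i, ∑ a ∈ Finset.univ.filter (fun a => st a = i), π a = 1)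
    (hdecomp : ∀ a, με a = lam (st a) * π a)
    -- the induced transition matrix, reward vector and stationary distribution
    (Ppi : Matrix S S ℝ)
    (hPpi : ∀ i j, Ppi i j = ∑ a ∈ Finset.univ.filter (fun a => st a = i), π a * P a j)
    (rpi : S → ℝ)
    (hrpi : ∀ i, rpi i = ∑ a ∈ Finset.univ.filter (fun a => st a = i), π a * r a)
    (ν : S → ℝ) (hνnn : ∀ i, 0 ≤ ν i) (hνsum : ∑ i, ν i = 1)
    (hstat : ∀ j, ∑ i, ν i * Ppi i j = ν j)
    -- the optimal value vector and optimal average reward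
    (vstar : S → ℝ) (vbar : ℝ)
    -- (a) the gap bound
    (ha : (∑ a, με a * ((vstar (st a) - ∑ j, P a j * vstar j) - r a)) + vbar ≤ ε)
    -- (b) approximate stationarity of the marginal
    (hb : ∑ j, |∑ i, lam i * (Ppi i j - (if i = j then 1 else 0))| ≤ ε / M)
    -- (c) mixing bound on the fundamental matrix
    (B : Matrix S S ℝ)
    (hB1 : (1 - Ppi + Matrix.of (fun _ j => ν j)) * B = 1)
    (hB2 : B * (1 - Ppi + Matrix.of (fun _ j => ν j)) = 1)
    (hBnorm : matNormInf B ≤ 2 * tmix)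
    -- (d) bound on the optimal value vector
    (hd : ∀ i, |vstar i| ≤ M) :
    ∑ i, ν i * rpi i ≥ vbar - 3 * ε := by
  classical
  have hM : (0:ℝ) < M := by
    rw [hMdef]; positivity
  set δ : S → ℝ := fun j => ∑ i, lam i * (Ppi i j - (if i = j then 1 else 0)) with hδdef
  set D : ℝ := ∑ j, |δ j| with hDdef
  have hb' : D ≤ ε / M := hb
  have hDnn : 0 ≤ D := Finset.sum_nonneg fun j _ => abs_nonneg _
  have hDM : D * M ≤ ε := by
    rw [le_div_iff₀ hM] at hb'
    nlinarith
  have hε : 0 ≤ ε := le_trans (by positivity) hDM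
  -- lam is a distribution
  have hlamsum : ∑ i, lam i = 1 := by
    rw [← hμεsum]
    simp_rw [hlam]
    exact Finset.sum_fiberwise _ _ _
  have hlamnn : ∀ i, 0 ≤ lam i := fun i => by
    rw [hlam]; exact Finset.sum_nonneg fun a _ => hμεnn a
  -- fiberwise rewriting
  have hfib : ∀ g : A → ℝ, ∑ a, με a * g a
      = ∑ i, ∑ a ∈ Finset.univ.filter (fun a => st a = i), με a * g a := by
    intro g; exact (Finset.sum_fiberwise _ _ _).symm
  have hPrewrite : ∀ j, ∑ a, με a * P a j = ∑ i, lam i * Ppi i j := by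
    intro j
    rw [hfib (fun a => P a j)]
    refine Finset.sum_congr rfl fun i _ => ?_
    rw [hPpi, Finset.mul_sum]
    refine Finset.sum_congr rfl fun a ha' => ?_
    have hst : st a = i := (Finset.mem_filter.mp ha').2
    rw [hdecomp, hst]; ring
  have hrrewrite : ∑ a, με a * r a = ∑ i, lam i * rpi i := by
    rw [hfib r]
    refine Finset.sum_congr rfl fun i _ => ?_
    rw [hrpi, Finset.mul_sum]
    refine Finset.sum_congr rfl fun a ha' => ?_
    have hst : st a = i := (Finset.mem_filter.mp ha').2
    rw [hdecomp, hst]; ring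
  have hvrewrite : ∑ a, με a * vstar (st a) = ∑ i, lam i * vstar i := by
    rw [hfib (fun a => vstar (st a))]
    refine Finset.sum_congr rfl fun i _ => ?_
    rw [hlam, Finset.sum_mul]
    refine Finset.sum_congr rfl fun a ha' => ?_
    have hst : st a = i := (Finset.mem_filter.mp ha').2
    rw [hst]
  -- rewrite the gap bound (a)
  have hmid : ∑ a, με a * (∑ j, P a j * vstar j) = ∑ j, (∑ i, lam i * Ppi i j) * vstar j := by
    calc ∑ a, με a * (∑ j, P a j * vstar j)
        = ∑ a, ∑ j, με a * P a j * vstar j := by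
          refine Finset.sum_congr rfl fun a _ => ?_
          rw [Finset.mul_sum]; exact Finset.sum_congr rfl fun j _ => by ring
      _ = ∑ j, ∑ a, με a * P a j * vstar j := Finset.sum_comm
      _ = ∑ j, (∑ i, lam i * Ppi i j) * vstar j := by
          refine Finset.sum_congr rfl fun j _ => ?_
          rw [← hPrewrite j, Finset.sum_mul]
  have hδ' : ∀ j, δ j = (∑ i, lam i * Ppi i j) - lam j := by
    intro j
    simp [hδdef, mul_sub, Finset.sum_sub_distrib, mul_ite, Finset.sum_ite_eq']
  have ha' : -(∑ j, δ j * vstar j) - (∑ i, lam i * rpi i) + vbar ≤ ε := by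
    have expand : ∑ a, με a * ((vstar (st a) - ∑ j, P a j * vstar j) - r a)
        = (∑ a, με a * vstar (st a)) - (∑ a, με a * (∑ j, P a j * vstar j))
          - ∑ a, με a * r a := by
      rw [← Finset.sum_sub_distrib, ← Finset.sum_sub_distrib]
      exact Finset.sum_congr rfl fun a _ => by ring
    rw [expand, hvrewrite, hmid, hrrewrite] at ha
    have key : ∑ j, δ j * vstar j
        = (∑ j, (∑ i, lam i * Ppi i j) * vstar j) - ∑ i, lam i * vstar i := by
      rw [← Finset.sum_sub_distrib]
      exact Finset.sum_congr rfl fun j _ => by rw [hδ']; ring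
    rw [key]; linarith
  -- bound |∑ δ v*| ≤ ε
  have hδv : |∑ j, δ j * vstar j| ≤ ε := by
    calc |∑ j, δ j * vstar j| ≤ ∑ j, |δ j * vstar j| := Finset.abs_sum_le_sum_abs _ _
      _ ≤ ∑ j, |δ j| * M := by
          refine Finset.sum_le_sum fun j _ => ?_
          rw [abs_mul]
          exact mul_le_mul_of_nonneg_left (hd j) (abs_nonneg _)
      _ = D * M := by rw [hDdef, Finset.sum_mul]
      _ ≤ ε := hDM
  have hL : vbar - 2 * ε ≤ ∑ i, lam i * rpi i := by
    have := abs_le.mp hδv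
    linarith
  -- entries of the fundamental-matrix identity
  set M0 : Matrix S S ℝ := 1 - Ppi + Matrix.of (fun _ j => ν j) with hM0def
  have hB1' : ∀ i j, ∑ k, M0 i k * B k j
      = if i = j then (1:ℝ) else 0 := by
    intro i j
    have := Matrix.ext_iff.mpr hB1 i j
    rw [Matrix.mul_apply] at this
    rw [this, Matrix.one_apply]
  have hM0 : ∀ i k, M0 i k
      = (if i = k then (1:ℝ) else 0) - Ppi i k + ν k := by
    intro i k
    simp [hM0def, Matrix.add_apply, Matrix.sub_apply, Matrix.one_apply]
  -- (lam - ν)ᵀ M0 = -δᵀ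
  have hxM0 : ∀ k, ∑ i, (lam i - ν i) * M0 i k
      = -δ k := by
    intro k
    have e : ∀ i, (lam i - ν i) * M0 i k
        = (lam i * (if i = k then (1:ℝ) else 0) - lam i * Ppi i k + lam i * ν k)
          - (ν i * (if i = k then (1:ℝ) else 0) - ν i * Ppi i k + ν i * ν k) := by
      intro i; rw [hM0]; ring
    simp_rw [e]
    rw [Finset.sum_sub_distrib]
    have t1 : ∑ i, (lam i * (if i = k then (1:ℝ) else 0) - lam i * Ppi i k + lam i * ν k)
        = lam k - (∑ i, lam i * Ppi i k) + ν k := by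
      rw [Finset.sum_add_distrib, Finset.sum_sub_distrib, ← Finset.sum_mul, hlamsum]
      simp [mul_ite, Finset.sum_ite_eq']
    have t2 : ∑ i, (ν i * (if i = k then (1:ℝ) else 0) - ν i * Ppi i k + ν i * ν k)
        = ν k - ν k + ν k := by
      rw [Finset.sum_add_distrib, Finset.sum_sub_distrib, ← Finset.sum_mul, hνsum, hstat]
      simp [mul_ite, Finset.sum_ite_eq']
    rw [t1, t2, hδ']; ring
  -- hence lam - ν = -δᵀ B
  have hx : ∀ j, lam j - ν j = ∑ k, (-δ k) * B k j := by
    intro j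
    have h1 : lam j - ν j = ∑ i, (lam i - ν i) * (if i = j then (1:ℝ) else 0) := by
      simp [mul_ite, Finset.sum_ite_eq']
    rw [h1]
    simp_rw [← hB1', Finset.mul_sum]
    rw [Finset.sum_comm]
    refine Finset.sum_congr rfl fun k _ => ?_
    have e : ∑ i, (lam i - ν i) * (M0 i k * B k j)
        = (∑ i, (lam i - ν i) * M0 i k) * B k j := by
      rw [Finset.sum_mul]
      exact Finset.sum_congr rfl fun i _ => by ring
    rw [e, hxM0]
  -- bounds on rpi
  have hrpinn : ∀ i, 0 ≤ rpi i := by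
    intro i; rw [hrpi]
    exact Finset.sum_nonneg fun a _ => mul_nonneg (hπnn a) (hr a).1
  have hrpile : ∀ i, rpi i ≤ 1 := by
    intro i; rw [hrpi, ← hπrow i]
    exact Finset.sum_le_sum fun a _ => by
      nlinarith [hπnn a, (hr a).1, (hr a).2]
  -- row sums of B
  have hrowB : ∀ k, ∑ j, |B k j| ≤ 2 * tmix :=
    fun k => le_trans (Finset.le_sup' (fun i => ∑ j, |B i j|) (Finset.mem_univ k)) hBnorm
  -- |(ν - lam)ᵀ rpi| bound
  have hdiff : ∑ j, (ν j - lam j) * rpi j ≥ -ε := by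
    have step1 : ∀ j, (ν j - lam j) * rpi j ≥ -|ν j - lam j| := by
      intro j
      rcases le_or_gt 0 (ν j - lam j) with h | h
      · have : 0 ≤ (ν j - lam j) * rpi j := mul_nonneg h (hrpinn j)
        nlinarith [abs_nonneg (ν j - lam j)]
      · have habs : |ν j - lam j| = -(ν j - lam j) := abs_of_neg h
        nlinarith [hrpile j, hrpinn j]
    have step2 : ∑ j, |ν j - lam j| ≤ ε := by
      have e1 : ∀ j, |ν j - lam j| ≤ ∑ k, |δ k| * |B k j| := by
        intro j
        have : ν j - lam j = ∑ k, δ k * B k j := by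
          have := hx j
          have e : ∑ k, (-δ k) * B k j = -(∑ k, δ k * B k j) := by
            rw [← Finset.sum_neg_distrib]
            exact Finset.sum_congr rfl fun k _ => by ring
          rw [e] at this
          linarith
        rw [this]
        calc |∑ k, δ k * B k j| ≤ ∑ k, |δ k * B k j| := Finset.abs_sum_le_sum_abs _ _
          _ = ∑ k, |δ k| * |B k j| := Finset.sum_congr rfl fun k _ => abs_mul _ _
      calc ∑ j, |ν j - lam j| ≤ ∑ j, ∑ k, |δ k| * |B k j| :=
            Finset.sum_le_sum fun j _ => e1 j
        _ = ∑ k, ∑ j, |δ k| * |B k j| := Finset.sum_comm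
        _ = ∑ k, |δ k| * ∑ j, |B k j| := by
            exact Finset.sum_congr rfl fun k _ => (Finset.mul_sum _ _ _).symm
        _ ≤ ∑ k, |δ k| * (2 * tmix) :=
            Finset.sum_le_sum fun k _ => mul_le_mul_of_nonneg_left (hrowB k) (abs_nonneg _)
        _ = D * M := by rw [hDdef, Finset.sum_mul, hMdef]
        _ ≤ ε := hDM
    calc ∑ j, (ν j - lam j) * rpi j ≥ ∑ j, -|ν j - lam j| :=
          Finset.sum_le_sum fun j _ => step1 j
      _ = -(∑ j, |ν j - lam j|) := by rw [Finset.sum_neg_distrib]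
      _ ≥ -ε := by linarith
  -- conclude
  have split : ∑ i, ν i * rpi i = (∑ i, lam i * rpi i) + ∑ j, (ν j - lam j) * rpi j := by
    rw [← Finset.sum_add_distrib]
    exact Finset.sum_congr rfl fun i _ => by ring
  rw [split]
  linarith
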